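/- Let ρ and σ be positive definite density matrices on ℂ^n and let t ∈ (0,1). Then the matrix ρ^t σ^{1−t} is Hermitian if and only if ρσ = σρ. Consequently, the generalized mixture M_{ρ,σ}^t := ρ^t σ^{1−t} / Tr(ρ^t σ^{1−t}) is a density matrix if and only if ρ and σ commute. -/

import Mathlib

open Matrix ComplexOrder

/-- Real power of a Hermitian matrix via its spectral decomposition:
`A ^ r = ∑ i, (λ i) ^ r |x i⟩⟨x i|` (and `0` if `A` is not Hermitian). -/
noncomputable def mRpow {m : Type*} [Fintype m] [DecidableEq m]
    (A : Matrix m m ℂ) (r : ℝ) : Matrix m m ℂ :=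
  if hA : A.IsHermitian then
    (hA.eigenvectorUnitary : Matrix m m ℂ) *
      Matrix.diagonal (fun i => ((hA.eigenvalues i ^ r : ℝ) : ℂ)) *
      star (hA.eigenvectorUnitary : Matrix m m ℂ)
  else 0

/-- The quantum relative α-entropy
`S_α(ρ‖σ) = (α/(1−α))·log Tr(ρ σ^{α−1}) − (1/(1−α))·log Tr(ρ^α) + log Tr(σ^α)`. -/
noncomputable def Salpha {m : Type*} [Fintype m] [DecidableEq m]
    (α : ℝ) (ρ σ : Matrix m m ℂ) : ℝ :=
  α / (1 - α) * Real.log ((ρ * mRpow σ (α - 1)).trace.re)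
    - 1 / (1 - α) * Real.log ((mRpow ρ α).trace.re)
    + Real.log ((mRpow σ α).trace.re)

section auxlemmas
variable {m : Type*} [Fintype m] [DecidableEq m]

set_option linter.unusedSectionVars false

lemma mRpow_eq {A : Matrix m m ℂ} (hA : A.IsHermitian) (r : ℝ) :
    mRpow A r = (hA.eigenvectorUnitary : Matrix m m ℂ) *
      Matrix.diagonal (fun i => ((hA.eigenvalues i ^ r : ℝ) : ℂ)) *
      star (hA.eigenvectorUnitary : Matrix m m ℂ) := by
  rw [mRpow, dif_pos hA]

lemma mRpow_isHermitian {A : Matrix m m ℂ} (hA : A.IsHermitian) (r : ℝ) :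
    (mRpow A r).IsHermitian := by
  rw [mRpow_eq hA]
  have hst : (star fun i => ((hA.eigenvalues i ^ r : ℝ) : ℂ))
      = fun i => ((hA.eigenvalues i ^ r : ℝ) : ℂ) := by
    funext i; simp [Pi.star_apply, Complex.star_def, Complex.conj_ofReal]
  show _ᴴ = _
  simp [conjTranspose_mul, diagonal_conjTranspose, mul_assoc, hst,
    star_eq_conjTranspose]

lemma conj_eq_iff (V : Matrix m m ℂ) (h2 : star V * V = 1)
    (X Y : Matrix m m ℂ) : V * X * star V = V * Y * star V ↔ X = Y := by
  constructor
  · intro h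
    calc X = (star V * V) * X * (star V * V) := by rw [h2, one_mul, mul_one]
    _ = star V * (V * X * star V) * V := by noncomm_ring
    _ = star V * (V * Y * star V) * V := by rw [h]
    _ = (star V * V) * Y * (star V * V) := by noncomm_ring
    _ = Y := by rw [h2, one_mul, mul_one]
  · rintro rfl; rfl

lemma conj_mul_conj (V : Matrix m m ℂ) (h2 : star V * V = 1) (X Y : Matrix m m ℂ) :
    (V * X * star V) * (V * Y * star V) = V * (X * Y) * star V := by
  calc (V * X * star V) * (V * Y * star V)
      = V * (X * ((star V * V) * Y)) * star V := by noncomm_ring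
    _ = V * (X * Y) * star V := by rw [h2, one_mul]

lemma comm_diagonal_iff (Q : Matrix m m ℂ) (d : m → ℂ) :
    Q * diagonal d = diagonal d * Q ↔ ∀ i j, Q i j * d j = d i * Q i j := by
  rw [← Matrix.ext_iff]
  simp [mul_diagonal, diagonal_mul]

lemma unitary_conj_comm_iff (V : Matrix m m ℂ) (h1 : V * star V = 1) (h2 : star V * V = 1)
    (d : m → ℂ) (P : Matrix m m ℂ) :
    P * (V * diagonal d * star V) = (V * diagonal d * star V) * P ↔
      ∀ i j, (star V * P * V) i j * d j = d i * (star V * P * V) i j := by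
  have hP : P = V * (star V * P * V) * star V := by
    calc P = (V * star V) * P * (V * star V) := by rw [h1, one_mul, mul_one]
      _ = V * (star V * P * V) * star V := by noncomm_ring
  rw [← comm_diagonal_iff]
  constructor
  · intro h
    rw [hP] at h
    rw [conj_mul_conj V h2, conj_mul_conj V h2] at h
    exact (conj_eq_iff V h2 _ _).mp h
  · intro h
    conv_lhs => rw [hP]
    conv_rhs => rw [hP]
    rw [conj_mul_conj V h2, conj_mul_conj V h2, h]

lemma rpow_inj' {a b r : ℝ} (ha : 0 < a) (hb : 0 < b) (hr : 0 < r) :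
    a ^ r = b ^ r ↔ a = b := by
  constructor
  · intro h
    rcases lt_trichotomy a b with hc | hc | hc
    · exact absurd h (ne_of_lt (Real.rpow_lt_rpow ha.le hc hr))
    · exact hc
    · exact absurd h.symm (ne_of_lt (Real.rpow_lt_rpow hb.le hc hr))
  · rintro rfl; rfl

lemma commute_mRpow_iff {A : Matrix m m ℂ} (hA : A.PosDef) {r : ℝ} (hr : 0 < r)
    (P : Matrix m m ℂ) :
    P * mRpow A r = mRpow A r * P ↔ P * A = A * P := by
  have hH := hA.isHermitian
  set V : Matrix m m ℂ := (hH.eigenvectorUnitary : Matrix m m ℂ) with hV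
  have h1 : V * star V = 1 := Matrix.mem_unitaryGroup_iff.mp hH.eigenvectorUnitary.2
  have h2 : star V * V = 1 := Matrix.mem_unitaryGroup_iff'.mp hH.eigenvectorUnitary.2
  have hiff1 : (P * mRpow A r = mRpow A r * P) ↔
      ∀ i j, (star V * P * V) i j * ((hH.eigenvalues j ^ r : ℝ) : ℂ)
        = ((hH.eigenvalues i ^ r : ℝ) : ℂ) * (star V * P * V) i j := by
    rw [mRpow_eq hH]
    exact unitary_conj_comm_iff V h1 h2 _ P
  have hiff2 : (P * A = A * P) ↔
      ∀ i j, (star V * P * V) i j * ((hH.eigenvalues j : ℝ) : ℂ)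
        = ((hH.eigenvalues i : ℝ) : ℂ) * (star V * P * V) i j := by
    conv_lhs => rw [hH.spectral_theorem]
    exact unitary_conj_comm_iff V h1 h2 _ P
  rw [hiff1, hiff2]
  have hev : ∀ i, 0 < hH.eigenvalues i := fun i => hA.eigenvalues_pos i
  apply forall_congr'; intro i; apply forall_congr'; intro j
  rw [mul_comm _ ((star V * P * V) i j), mul_comm _ ((star V * P * V) i j),
    mul_eq_mul_left_iff, mul_eq_mul_left_iff]
  simp only [Complex.ofReal_inj]
  rw [rpow_inj' (hev j) (hev i) hr]

lemma posDef_conj' {B C : Matrix m m ℂ} (hC : C.PosDef) (hB : IsUnit B) :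
    (B * C * star B).PosDef := by
  rw [posDef_iff_dotProduct_mulVec]
  constructor
  · show _ᴴ = _
    simp [star_eq_conjTranspose, conjTranspose_mul, hC.isHermitian.eq, mul_assoc]
  · intro x hx
    have hy : star B *ᵥ x ≠ 0 := by
      intro h0
      apply hx
      have hinj : Function.Injective (star B).mulVec :=
        mulVec_injective_iff_isUnit.mpr ((isUnit_star).mpr hB)
      apply hinj
      rw [h0, mulVec_zero]
    have hkey : star x ⬝ᵥ (B * C * star B) *ᵥ x
        = star (star B *ᵥ x) ⬝ᵥ C *ᵥ (star B *ᵥ x) := by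
      rw [star_mulVec, ← mulVec_mulVec, ← mulVec_mulVec, dotProduct_mulVec,
        star_eq_conjTranspose, conjTranspose_conjTranspose]
    rw [hkey]
    exact hC.dotProduct_mulVec_pos hy

lemma posDef_trace_pos [Nonempty m] {M : Matrix m m ℂ} (hM : M.PosDef) : 0 < M.trace := by
  have hdiag : ∀ i, 0 < M i i := by
    intro i
    have h := hM.dotProduct_mulVec_pos (x := Pi.single i 1) (by
      intro h0
      have := congrFun h0 i
      simp at this)
    simpa [mulVec_single, dotProduct, Pi.single_apply, apply_ite, mul_ite, ite_mul] using h
  rw [Matrix.trace]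
  exact Finset.sum_pos (fun i _ => hdiag i) Finset.univ_nonempty

lemma posSemidef_smul_real {M : Matrix m m ℂ} (hM : M.PosSemidef) {r : ℝ} (hr : 0 ≤ r) :
    ((r : ℂ) • M).PosSemidef := by
  rw [posSemidef_iff_dotProduct_mulVec]
  constructor
  · show _ᴴ = _
    rw [conjTranspose_smul, hM.1.eq]
    congr 1
    simp [Complex.star_def, Complex.conj_ofReal]
  · intro x
    rw [smul_mulVec, dotProduct_smul, smul_eq_mul]
    exact mul_nonneg (Complex.zero_le_real.mpr hr) (hM.dotProduct_mulVec_nonneg x)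

lemma mRpow_posDef {A : Matrix m m ℂ} (hA : A.PosDef) (r : ℝ) : (mRpow A r).PosDef := by
  have hH := hA.isHermitian
  rw [mRpow_eq hH]
  have h1 : (hH.eigenvectorUnitary : Matrix m m ℂ) * star (hH.eigenvectorUnitary : Matrix m m ℂ)
      = 1 := Matrix.mem_unitaryGroup_iff.mp hH.eigenvectorUnitary.2
  have h2 : star (hH.eigenvectorUnitary : Matrix m m ℂ) * (hH.eigenvectorUnitary : Matrix m m ℂ)
      = 1 := Matrix.mem_unitaryGroup_iff'.mp hH.eigenvectorUnitary.2
  refine posDef_conj' (Matrix.PosDef.diagonal fun i => ?_)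
    ⟨⟨_, star (hH.eigenvectorUnitary : Matrix m m ℂ), h1, h2⟩, rfl⟩
  exact Complex.zero_lt_real.mpr (Real.rpow_pos_of_pos (hA.eigenvalues_pos i) r)

lemma mRpow_mul_mRpow {A : Matrix m m ℂ} (hA : A.PosDef) (r s : ℝ) :
    mRpow A r * mRpow A s = mRpow A (r + s) := by
  have hH := hA.isHermitian
  have h2 : star (hH.eigenvectorUnitary : Matrix m m ℂ) * (hH.eigenvectorUnitary : Matrix m m ℂ)
      = 1 := Matrix.mem_unitaryGroup_iff'.mp hH.eigenvectorUnitary.2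
  rw [mRpow_eq hH, mRpow_eq hH, mRpow_eq hH, conj_mul_conj _ h2, diagonal_mul_diagonal]
  have hfun : (fun i => ((hH.eigenvalues i ^ r : ℝ) : ℂ) * ((hH.eigenvalues i ^ s : ℝ) : ℂ))
      = fun i => ((hH.eigenvalues i ^ (r + s) : ℝ) : ℂ) := by
    funext i
    rw [← Complex.ofReal_mul, ← Real.rpow_add (hA.eigenvalues_pos i)]
  rw [hfun]

end auxlemmas

/-- For positive definite density matrices `ρ, σ` and `t ∈ (0,1)`, the matrix
`ρ^t σ^{1−t}` is Hermitian iff `ρσ = σρ`; consequently the generalized mixture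
`M = ρ^t σ^{1−t} / Tr(ρ^t σ^{1−t})` is a density matrix iff `ρ` and `σ` commute. -/
theorem mixture_density_iff_commute {n : ℕ} (t : ℝ) (ht : 0 < t) (ht1 : t < 1)
    (ρ σ : Matrix (Fin n) (Fin n) ℂ)
    (hρ : ρ.PosDef) (hρ1 : ρ.trace = 1)
    (hσ : σ.PosDef) (hσ1 : σ.trace = 1) :
    ((mRpow ρ t * mRpow σ (1 - t)).IsHermitian ↔ ρ * σ = σ * ρ) ∧
    ((((mRpow ρ t * mRpow σ (1 - t)).trace)⁻¹ • (mRpow ρ t * mRpow σ (1 - t))).PosSemidef ∧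
        (((mRpow ρ t * mRpow σ (1 - t)).trace)⁻¹ • (mRpow ρ t * mRpow σ (1 - t))).trace = 1
      ↔ ρ * σ = σ * ρ) := by
  haveI hn : Nonempty (Fin n) := by
    by_contra h
    rw [not_nonempty_iff] at h
    rw [Matrix.trace, Finset.univ_eq_empty, Finset.sum_empty] at hρ1
    exact zero_ne_one hρ1
  set A := mRpow ρ t with hA
  set B := mRpow σ (1 - t) with hB
  have hAh : A.IsHermitian := mRpow_isHermitian hρ.isHermitian t
  have hBh : B.IsHermitian := mRpow_isHermitian hσ.isHermitian (1 - t)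
  have ht1' : 0 < 1 - t := by linarith
  have ht2 : 0 < t / 2 := by linarith
  -- Part 1
  have part1 : (A * B).IsHermitian ↔ ρ * σ = σ * ρ := by
    constructor
    · intro h
      have hBA : B * A = A * B := by
        calc B * A = (A * B)ᴴ := by rw [conjTranspose_mul, hAh.eq, hBh.eq]
        _ = A * B := h
      have h1 : B * ρ = ρ * B := (commute_mRpow_iff hρ ht B).mp hBA
      exact (commute_mRpow_iff hσ ht1' ρ).mp h1.symm
    · intro h
      have h1 : ρ * B = B * ρ := (commute_mRpow_iff hσ ht1' ρ).mpr h
      have h2 : B * A = A * B := (commute_mRpow_iff hρ ht B).mpr h1.symm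
      show (A * B)ᴴ = A * B
      rw [conjTranspose_mul, hAh.eq, hBh.eq, h2]
  refine ⟨part1, ?_⟩
  -- trace is a positive real number
  have hA2 : mRpow ρ (t / 2) * mRpow ρ (t / 2) = A := by
    rw [mRpow_mul_mRpow hρ, hA]
    norm_num
  have hXh : (mRpow ρ (t / 2)).IsHermitian := mRpow_isHermitian hρ.isHermitian (t / 2)
  have hXpd : (mRpow ρ (t / 2)).PosDef := mRpow_posDef hρ (t / 2)
  have hPD : (mRpow ρ (t / 2) * B * mRpow ρ (t / 2)).PosDef := by
    have := posDef_conj' (B := mRpow ρ (t / 2)) (mRpow_posDef hσ (1 - t)) hXpd.isUnit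
    rwa [star_eq_conjTranspose, hXh.eq] at this
  have hc_eq : (A * B).trace = (mRpow ρ (t / 2) * B * mRpow ρ (t / 2)).trace := by
    rw [← hA2, mul_assoc, trace_mul_comm]
  have hcpos : 0 < (A * B).trace := by
    rw [hc_eq]; exact posDef_trace_pos hPD
  obtain ⟨hcre, hcim⟩ := Complex.lt_def.mp hcpos
  simp only [Complex.zero_re, Complex.zero_im] at hcre hcim
  have hcr : (A * B).trace = (((A * B).trace.re : ℝ) : ℂ) := by
    apply Complex.ext
    · rfl
    · simp [← hcim]
  have hcne : (A * B).trace ≠ 0 := ne_of_gt hcpos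
  constructor
  · rintro ⟨hpsd, _⟩
    apply part1.mp
    have hMN : A * B = (A * B).trace • ((A * B).trace⁻¹ • (A * B)) := by
      rw [smul_smul, mul_inv_cancel₀ hcne, one_smul]
    show (A * B)ᴴ = A * B
    conv_lhs => rw [hMN]
    conv_rhs => rw [hMN]
    rw [conjTranspose_smul, hpsd.1.eq]
    congr 1
    rw [hcr]
    exact Complex.conj_ofReal _
  · intro h
    have h1 : ρ * B = B * ρ := (commute_mRpow_iff hσ ht1' ρ).mpr h
    have h2 : B * mRpow ρ (t / 2) = mRpow ρ (t / 2) * B :=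
      (commute_mRpow_iff hρ ht2 B).mpr h1.symm
    have hM : A * B = mRpow ρ (t / 2) * B * mRpow ρ (t / 2) := by
      calc A * B = mRpow ρ (t / 2) * mRpow ρ (t / 2) * B := by rw [hA2]
        _ = mRpow ρ (t / 2) * (mRpow ρ (t / 2) * B) := by rw [mul_assoc]
        _ = mRpow ρ (t / 2) * (B * mRpow ρ (t / 2)) := by rw [← h2]
        _ = mRpow ρ (t / 2) * B * mRpow ρ (t / 2) := by rw [mul_assoc]
    constructor
    · rw [hcr, ← Complex.ofReal_inv]
      exact posSemidef_smul_real (hM ▸ hPD.posSemidef) (inv_nonneg.mpr hcre.le)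
    · rw [trace_smul, smul_eq_mul, inv_mul_cancel₀ hcne]
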